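/- For each n ≥ 0, the action (a ⊗ a′ ⊗ b)(a₀ ⊗ ⋯ ⊗ a_{n+1}) = Σ a b₍₁₎a₀ ⊗ b₍₂₎a₁ ⊗ ⋯ ⊗ b₍ₙ₊₁₎aₙ ⊗ b₍ₙ₊₂₎a_{n+1}a′ makes the vector space A^{⊗(n+2)} into a left module over the crossed product algebra X = A ⊗ A ⊗ H. -/

import Mathlib

open TensorProduct

noncomputable section ModuleAlgebraDeligne

universe u

variable (K A H : Type u)

/-- An `H`-module-algebra structure on `A`: an `H`-action by `K`-linear maps making `A`
an `H`-module, such that multiplication and unit of `A` are `H`-linear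
(the Sweedler sum `∑ (b₍₁₎a₁)(b₍₂₎a₂)` is expressed via `Coalgebra.comul`). -/
structure ModAlg [Field K] [Ring A] [Algebra K A] [Ring H] [Bialgebra K H] where
  act : H →ₗ[K] A →ₗ[K] A
  act_one : ∀ a : A, act 1 a = a
  act_mul : ∀ (b c : H) (a : A), act (b * c) a = act b (act c a)
  act_unit : ∀ b : H, act b (1 : A) = (Coalgebra.counit (R := K) b) • (1 : A)
  act_alg : ∀ (b : H) (a₁ a₂ : A),
    act b (a₁ * a₂) =
      LinearMap.mul' K A
        ((TensorProduct.homTensorHomMap (RingHom.id K) A A A A)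
          (TensorProduct.map act act (Coalgebra.comul (R := K) b)) (a₁ ⊗ₜ[K] a₂))

variable [Field K] [Ring A] [Algebra K A] [Ring H] [Bialgebra K H]

/-- The defining formula of the crossed product multiplication on `X = A ⊗ A ⊗ H`:
`(a₁ ⊗ a₁' ⊗ b¹)(a₂ ⊗ a₂' ⊗ b²) = ∑ a₁(b¹₍₁₎a₂) ⊗ (b¹₍₃₎a₂')a₁' ⊗ b¹₍₂₎b²`. -/
def XMulFormula (act : H →ₗ[K] A →ₗ[K] A)
    (mul : (A ⊗[K] (A ⊗[K] H)) →ₗ[K] (A ⊗[K] (A ⊗[K] H)) →ₗ[K] (A ⊗[K] (A ⊗[K] H))) :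
    Prop :=
  ∀ (a₁ a₁' : A) (b₁ : H) (a₂ a₂' : A) (b₂ : H),
    mul (a₁ ⊗ₜ[K] (a₁' ⊗ₜ[K] b₁)) (a₂ ⊗ₜ[K] (a₂' ⊗ₜ[K] b₂)) =
      TensorProduct.map
        (LinearMap.mulLeft K a₁ ∘ₗ act.flip a₂)
        ((TensorProduct.map (LinearMap.mulRight K a₁' ∘ₗ act.flip a₂')
            (LinearMap.mulRight K b₂)) ∘ₗ (TensorProduct.comm K H H).toLinearMap)
        ((LinearMap.lTensor H (Coalgebra.comul (R := K)) ∘ₗ Coalgebra.comul (R := K)) b₁)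

/-- Iterated tensor power `A^{⊗(n+1)}` (so `Tpow K A n` has `n+1` tensor factors),
bundled with its module structure. -/
def TpowAux : ℕ → Σ' (T : Type u) (_ : AddCommGroup T), Module K T
  | 0 => ⟨A, inferInstance, inferInstance⟩
  | n + 1 =>
    letI T := TpowAux n
    letI : AddCommGroup T.1 := T.2.1
    letI : Module K T.1 := T.2.2
    ⟨A ⊗[K] T.1, inferInstance, inferInstance⟩

/-- `Tpow K A n = A^{⊗(n+1)}`. -/
def Tpow (n : ℕ) : Type u := (TpowAux K A n).1

instance instTpowAuxACG (n : ℕ) : AddCommGroup (TpowAux K A n).1 := (TpowAux K A n).2.1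
instance instTpowAuxMod (n : ℕ) : Module K (TpowAux K A n).1 := (TpowAux K A n).2.2
instance (n : ℕ) : AddCommGroup (Tpow K A n) := (TpowAux K A n).2.1
instance (n : ℕ) : Module K (Tpow K A n) := (TpowAux K A n).2.2

/-- Cast between equal tensor powers (identity when `m = n`, junk `0` otherwise). -/
def tmap (m n : ℕ) : Tpow K A m →ₗ[K] Tpow K A n :=
  if h : m = n then by subst h; exact LinearMap.id else 0

/-- Left multiplication by an element of `A` on the first tensor factor. -/
def lmulL : ∀ n : ℕ, A →ₗ[K] Tpow K A n →ₗ[K] Tpow K A n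
  | 0 => LinearMap.mul K A
  | n + 1 =>
    (LinearMap.rTensorHom (R := K) (M := Tpow K A n) (N := A) (P := A)) ∘ₗ
      LinearMap.mul K A

/-- Right multiplication by an element of `A` on the last tensor factor. -/
def rmulL : ∀ n : ℕ, A →ₗ[K] Tpow K A n →ₗ[K] Tpow K A n
  | 0 => (LinearMap.mul K A).flip
  | n + 1 =>
    (LinearMap.lTensorHom (R := K) (M := A) (N := Tpow K A n) (P := Tpow K A n)) ∘ₗ
      rmulL n

/-- Componentwise action of `H^{⊗(n+1)}` on `A^{⊗(n+1)}` induced by an action of `H` on `A`. -/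
def tact (act : H →ₗ[K] A →ₗ[K] A) :
    ∀ n : ℕ, Tpow K H n →ₗ[K] Tpow K A n →ₗ[K] Tpow K A n
  | 0 => act
  | n + 1 =>
    (TensorProduct.homTensorHomMap (RingHom.id K) A (Tpow K A n) A (Tpow K A n)) ∘ₗ
      TensorProduct.map act (tact act n)

/-- Iterated comultiplication `Δⁿ : H → H^{⊗(n+1)}`. -/
def itComul : ∀ n : ℕ, H →ₗ[K] Tpow K H n
  | 0 => LinearMap.id
  | n + 1 => LinearMap.lTensor H (itComul n) ∘ₗ Coalgebra.comul (R := K)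

/-- The action of the pure tensor `a ⊗ a' ⊗ b ∈ X = A ⊗ A ⊗ H` on `A^{⊗(n+1)}`:
`(a ⊗ a' ⊗ b)(a₀ ⊗ ⋯ ⊗ aₙ) = ∑ a b₍₁₎a₀ ⊗ b₍₂₎a₁ ⊗ ⋯ ⊗ b₍ₙ₊₁₎aₙ a'`. -/
def xActP (act : H →ₗ[K] A →ₗ[K] A) (n : ℕ) (a a' : A) (b : H) :
    Tpow K A n →ₗ[K] Tpow K A n :=
  lmulL K A n a ∘ₗ rmulL K A n a' ∘ₗ tact K A H act n (itComul K H n b)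

/-- `X`-linearity (equivariance with respect to all pure tensors of `X = A ⊗ A ⊗ H`)
of a degree-`m` Hopf-Hochschild cochain `g : A^{⊗(m+2)} → A`. -/
def IsXLinear (act : H →ₗ[K] A →ₗ[K] A) (m : ℕ) (g : Tpow K A (m + 1) →ₗ[K] A) : Prop :=
  ∀ (a a' : A) (b : H) (t : Tpow K A (m + 1)),
    g (xActP K A H act (m + 1) a a' b t) = a * act b (g t) * a'

/-- Append an element of `A` as a new last tensor factor. -/
def appendA : ∀ n : ℕ, A →ₗ[K] Tpow K A n →ₗ[K] Tpow K A (n + 1)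
  | 0 => (TensorProduct.mk K A A).flip
  | n + 1 =>
    (LinearMap.lTensorHom (R := K) (M := A) (N := Tpow K A n) (P := Tpow K A (n + 1))) ∘ₗ
      appendA n

/-- The "inner part" `g(1 ⊗ - ⊗ 1) : A^{⊗n} → A` of a cochain `g : A^{⊗(n+2)} → A`. -/
def innerC {n : ℕ} (g : Tpow K A (n + 2) →ₗ[K] A) : Tpow K A n →ₗ[K] A :=
  g ∘ₗ TensorProduct.mk K A (Tpow K A (n + 1)) 1 ∘ₗ appendA K A n 1

/-- Consume the first `n+1` tensor factors of `A^{⊗(S+n+2)}` using a map `A^{⊗(n+1)} → A`,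
leaving the remaining `A^{⊗(S+1)}`. -/
def consume : ∀ n S : ℕ,
    (Tpow K A n →ₗ[K] A) →ₗ[K] (Tpow K A (S + n + 1) →ₗ[K] A ⊗[K] Tpow K A S)
  | 0, S => LinearMap.rTensorHom (R := K) (M := Tpow K A S) (N := A) (P := A)
  | n + 1, S =>
    (TensorProduct.lift.equiv (RingHom.id K) A (Tpow K A (S + n + 1)) (A ⊗[K] Tpow K A S)).toLinearMap ∘ₗ
      (LinearMap.llcomp K A (Tpow K A n →ₗ[K] A)
          (Tpow K A (S + n + 1) →ₗ[K] A ⊗[K] Tpow K A S) (consume n S)) ∘ₗ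
        TensorProduct.lcurry (RingHom.id K) A (Tpow K A n) A

/-- An operadic "entry": a Hopf-Hochschild cochain of degree `m`,
i.e. a linear map `A^{⊗(m+2)} → A`. -/
def Entry : Type u := Σ' m : ℕ, Tpow K A (m + 1) →ₗ[K] A

/-- Total degree of a list of entries. -/
def sumA : List (Entry K A) → ℕ
  | [] => 0
  | e :: l => sumA l + e.1

/-- The block-substitution map underlying the operad structure maps `γ`. -/
def gammaAux : ∀ l : List (Entry K A), Tpow K A (sumA K A l) →ₗ[K] Tpow K A l.length
  | [] => LinearMap.id
  | ⟨0, _⟩ :: _ => 0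
  | ⟨n + 1, g⟩ :: l =>
    LinearMap.lTensor A (gammaAux l) ∘ₗ consume K A n (sumA K A l) (innerC K A g)

/-- The operad structure map `γ(f; g₁, …, g_k)` of the Hopf-Hochschild cochain operad. -/
def gamma (l : List (Entry K A)) (f : Tpow K A (l.length + 1) →ₗ[K] A) :
    Tpow K A (sumA K A l + 1) →ₗ[K] A :=
  f ∘ₗ LinearMap.lTensor A (gammaAux K A l)

/-- `γ(f; g₁, …, g_k)` with degree bookkeeping by casts: `f` has degree `k`,
the result is regarded as a map on `Tpow K A M = A^{⊗(M+1)}`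
(the casts are identities in every intended use, where `l.length = k`
and `M = sumA l + 1`). -/
def gammaD (k : ℕ) (f : Tpow K A (k + 1) →ₗ[K] A) (l : List (Entry K A)) (M : ℕ) :
    Tpow K A M →ₗ[K] A :=
  gamma K A l (f ∘ₗ tmap K A (l.length + 1) (k + 1)) ∘ₗ tmap K A M (sumA K A l + 1)

/-- The identity cochain `Id ∈ C(1)`, `a₀ ⊗ a₁ ⊗ a₂ ↦ a₀a₁a₂`. -/
def idC : Tpow K A 2 →ₗ[K] A :=
  LinearMap.mul' K A ∘ₗ LinearMap.lTensor A (LinearMap.mul' K A)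

/-- `Id` as an entry. -/
def idE : Entry K A := ⟨1, idC K A⟩

/-- The multiplication cochain `π ∈ C(2)`, `a₀ ⊗ a₁ ⊗ a₂ ⊗ a₃ ↦ a₀a₁a₂a₃`. -/
def piC : Tpow K A 3 →ₗ[K] A :=
  LinearMap.mul' K A ∘ₗ
    LinearMap.lTensor A (LinearMap.mul' K A ∘ₗ LinearMap.lTensor A (LinearMap.mul' K A))

/-- The face map `∂ⱼ : A^{⊗(n+2)} → A^{⊗(n+1)}` of the bar complex. -/
def face : ∀ n j : ℕ, Tpow K A (n + 1) →ₗ[K] Tpow K A n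
  | n, 0 => TensorProduct.lift (lmulL K A n)
  | 0, _ + 1 => TensorProduct.lift (lmulL K A 0)
  | n + 1, j + 1 => LinearMap.lTensor A (face n j)

/-- The bar differential `d_n = ∑_{j=0}^n (−1)ʲ ∂ⱼ : A^{⊗(n+2)} → A^{⊗(n+1)}`. -/
def barDiff (n : ℕ) : Tpow K A (n + 1) →ₗ[K] Tpow K A n :=
  ∑ j ∈ Finset.range (n + 1), (-1 : K) ^ j • face K A n j

end ModuleAlgebraDeligne


noncomputable section DeligneAux
open TensorProduct

universe u
variable {K A H : Type u} [Field K] [Ring A] [Algebra K A] [Ring H] [Bialgebra K H]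

/-- The Sweedler action `Θ m b = tact (Δ^m b)`. -/
def theta (M : ModAlg K A H) (m : ℕ) : H →ₗ[K] Tpow K A m →ₗ[K] Tpow K A m :=
  tact K A H M.act m ∘ₗ itComul K H m

lemma theta_zero (M : ModAlg K A H) (b : H) : theta M 0 b = M.act b := rfl

lemma tact_tmul (M : ModAlg K A H) (m : ℕ) (h : H) (s : Tpow K H m) :
    tact K A H M.act (m+1) (h ⊗ₜ[K] s)
      = TensorProduct.map (M.act h) (tact K A H M.act m s) := by
  show (TensorProduct.homTensorHomMap (RingHom.id K) A (Tpow K A m) A (Tpow K A m) ∘ₗ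
      TensorProduct.map M.act (tact K A H M.act m)) (h ⊗ₜ[K] s) = _
  rw [LinearMap.comp_apply, TensorProduct.map_tmul, TensorProduct.homTensorHomMap_apply]

/-- `tact` in degree `m+1` as a linear map of `Δ b ∈ H ⊗ H`. -/
def thetaC (M : ModAlg K A H) (m : ℕ) :
    H ⊗[K] H →ₗ[K] Tpow K A (m+1) →ₗ[K] Tpow K A (m+1) :=
  tact K A H M.act (m+1) ∘ₗ LinearMap.lTensor H (itComul K H m)

lemma thetaC_tmul (M : ModAlg K A H) (m : ℕ) (h₁ h₂ : H) :
    thetaC M m (h₁ ⊗ₜ[K] h₂) = TensorProduct.map (M.act h₁) (theta M m h₂) := by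
  rw [show thetaC M m (h₁ ⊗ₜ[K] h₂)
      = tact K A H M.act (m+1) (h₁ ⊗ₜ[K] itComul K H m h₂) from rfl, tact_tmul]
  rfl

lemma theta_succ (M : ModAlg K A H) (m : ℕ) (b : H) :
    theta M (m+1) b = thetaC M m (Coalgebra.comul (R := K) b) := rfl

lemma lmulL_zero_apply (a x : A) : lmulL K A 0 a x = a * x := rfl
lemma rmulL_zero_apply (a x : A) : rmulL K A 0 a x = x * a := rfl

lemma lmulL_succ (m : ℕ) (a : A) :
    lmulL K A (m+1) a = LinearMap.rTensor (Tpow K A m) (lmulL K A 0 a) := rfl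
lemma rmulL_succ (m : ℕ) (a : A) :
    rmulL K A (m+1) a = LinearMap.lTensor A (rmulL K A m a) := rfl

lemma lmulL_zero_one : lmulL K A 0 (1 : A) = LinearMap.id := by
  refine LinearMap.ext fun (x : A) => ?_; show (1:A) * x = x; rw [one_mul]

lemma lmulL_one (m : ℕ) : lmulL K A m (1 : A) = LinearMap.id := by
  cases m with
  | zero => exact lmulL_zero_one
  | succ m => rw [lmulL_succ, lmulL_zero_one, LinearMap.rTensor_id]; rfl

lemma rmulL_one (m : ℕ) : rmulL K A m (1 : A) = LinearMap.id := by
  induction m with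
  | zero => refine LinearMap.ext fun (x : A) => ?_; show x * (1:A) = x; rw [mul_one]
  | succ m ih => rw [rmulL_succ, ih, LinearMap.lTensor_id]; rfl

lemma lmulL_zero_mul (a b : A) :
    lmulL K A 0 (a * b) = lmulL K A 0 a ∘ₗ lmulL K A 0 b := by
  refine LinearMap.ext fun (x : A) => ?_; show (a*b)*x = a*(b*x); rw [mul_assoc]

lemma lmulL_mul (m : ℕ) (a b : A) :
    lmulL K A m (a * b) = lmulL K A m a ∘ₗ lmulL K A m b := by
  cases m with
  | zero => exact lmulL_zero_mul a b
  | succ m => rw [lmulL_succ, lmulL_succ, lmulL_succ, lmulL_zero_mul,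
      LinearMap.rTensor_comp]; rfl

lemma rmulL_mul (m : ℕ) (a b : A) :
    rmulL K A m (a * b) = rmulL K A m b ∘ₗ rmulL K A m a := by
  induction m with
  | zero => refine LinearMap.ext fun (x : A) => ?_; show x*(a*b) = (x*a)*b; rw [mul_assoc]
  | succ m ih => rw [rmulL_succ, rmulL_succ, rmulL_succ, ih, LinearMap.lTensor_comp]; rfl

lemma lr_comm (m : ℕ) (a a' : A) :
    lmulL K A m a ∘ₗ rmulL K A m a' = rmulL K A m a' ∘ₗ lmulL K A m a := by
  cases m with
  | zero =>
    refine LinearMap.ext fun (x : A) => ?_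
    show a * (x * a') = (a * x) * a'
    rw [mul_assoc]
  | succ m =>
    apply TensorProduct.ext'
    intro x t
    rfl

lemma act_one' (M : ModAlg K A H) : M.act 1 = LinearMap.id :=
  LinearMap.ext M.act_one

lemma act_mul' (M : ModAlg K A H) (b c : H) : M.act (b * c) = M.act b ∘ₗ M.act c :=
  LinearMap.ext (M.act_mul b c)

lemma theta_one (M : ModAlg K A H) (m : ℕ) : theta M m 1 = LinearMap.id := by
  induction m with
  | zero => rw [theta_zero, act_one']; rfl
  | succ m ih =>
    rw [theta_succ, Bialgebra.comul_one, Algebra.TensorProduct.one_def, thetaC_tmul,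
      act_one', ih, TensorProduct.map_id]; rfl

lemma theta_mul (M : ModAlg K A H) (m : ℕ) :
    ∀ b b' : H, theta M m (b * b') = theta M m b ∘ₗ theta M m b' := by
  induction m with
  | zero => intro b b'; rw [theta_zero, theta_zero, theta_zero, act_mul']; rfl
  | succ m ih =>
    have hC : ∀ c c' : H ⊗[K] H, thetaC M m (c * c') = thetaC M m c ∘ₗ thetaC M m c' := by
      intro c c'
      induction c using TensorProduct.induction_on with
      | zero => simp
      | add u v hu hv => simp [add_mul, hu, hv, LinearMap.add_comp]
      | tmul h₁ h₂ =>
        induction c' using TensorProduct.induction_on with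
        | zero => simp
        | add u v hu hv => simp [mul_add, hu, hv, LinearMap.comp_add]
        | tmul h₁' h₂' =>
          rw [Algebra.TensorProduct.tmul_mul_tmul, thetaC_tmul, thetaC_tmul, thetaC_tmul,
            act_mul', ih, TensorProduct.map_comp]; rfl
    intro b b'
    rw [theta_succ, theta_succ, theta_succ, Bialgebra.comul_mul, hC]

/-- The bilinear map `(h₁, h₂) ↦ lmulL (h₁ ▸ a) ∘ Θ h₂`. -/
def keyLbil (M : ModAlg K A H) (m : ℕ) (a : A) :
    H →ₗ[K] H →ₗ[K] Tpow K A m →ₗ[K] Tpow K A m :=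
  LinearMap.mk₂ K (fun h₁ h₂ => lmulL K A m (M.act h₁ a) ∘ₗ theta M m h₂)
    (fun h h' h₂ => by simp [map_add, LinearMap.add_comp])
    (fun c h h₂ => by simp [map_smul, LinearMap.smul_comp])
    (fun h₁ h h' => by simp [map_add, LinearMap.comp_add])
    (fun c h₁ h => by simp [map_smul, LinearMap.comp_smul])

/-- The bilinear map `(h₁, h₂) ↦ rmulL (h₂ ▸ a') ∘ Θ h₁`. -/
def keyRbil (M : ModAlg K A H) (m : ℕ) (a' : A) :
    H →ₗ[K] H →ₗ[K] Tpow K A m →ₗ[K] Tpow K A m :=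
  LinearMap.mk₂ K (fun h₁ h₂ => rmulL K A m (M.act h₂ a') ∘ₗ theta M m h₁)
    (fun h h' h₂ => by simp [map_add, LinearMap.comp_add])
    (fun c h h₂ => by simp [map_smul, LinearMap.comp_smul])
    (fun h₁ h h' => by simp [map_add, LinearMap.add_comp])
    (fun c h₁ h => by simp [map_smul, LinearMap.smul_comp])

lemma keyL_zero (M : ModAlg K A H) (a : A) (b : H) :
    theta M 0 b ∘ₗ lmulL K A 0 a
      = TensorProduct.lift (keyLbil M 0 a) (Coalgebra.comul (R := K) b) := by
  refine LinearMap.ext fun (x : A) => ?_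
  show theta M 0 b (lmulL K A 0 a x) = _
  show M.act b (a * x) = _
  rw [M.act_alg]
  generalize Coalgebra.comul (R := K) b = c
  induction c using TensorProduct.induction_on with
  | zero => simp; rfl
  | tmul h₁ h₂ =>
    simp only [TensorProduct.map_tmul, TensorProduct.homTensorHomMap_apply,
      TensorProduct.map_tmul, LinearMap.mul'_apply, TensorProduct.lift.tmul,
      keyLbil, LinearMap.mk₂_apply, LinearMap.comp_apply, theta_zero]
    rfl
  | add u v hu hv => simp [map_add, hu, hv]; rfl

lemma keyR_zero (M : ModAlg K A H) (a' : A) (b : H) :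
    theta M 0 b ∘ₗ rmulL K A 0 a'
      = TensorProduct.lift (keyRbil M 0 a') (Coalgebra.comul (R := K) b) := by
  refine LinearMap.ext fun (x : A) => ?_
  show theta M 0 b (rmulL K A 0 a' x) = _
  show M.act b (x * a') = _
  rw [M.act_alg]
  generalize Coalgebra.comul (R := K) b = c
  induction c using TensorProduct.induction_on with
  | zero => simp; rfl
  | tmul h₁ h₂ =>
    simp only [TensorProduct.map_tmul, TensorProduct.homTensorHomMap_apply,
      TensorProduct.map_tmul, LinearMap.mul'_apply, TensorProduct.lift.tmul,
      keyRbil, LinearMap.mk₂_apply, LinearMap.comp_apply, theta_zero]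
    rfl
  | add u v hu hv => simp [map_add, hu, hv]; rfl

/-- `(Δ ⊗ id)`-form auxiliary map for `keyL`. -/
def PL (M : ModAlg K A H) (m : ℕ) (a : A) :
    (H ⊗[K] H) ⊗[K] H →ₗ[K] Tpow K A (m+1) →ₗ[K] Tpow K A (m+1) :=
  TensorProduct.lift <| LinearMap.mk₂ K
    (fun c h₃ => TensorProduct.map (TensorProduct.lift (keyLbil M 0 a) c) (theta M m h₃))
    (fun c c' h₃ => by simp [map_add]; exact TensorProduct.map_add_left _ _ _)
    (fun k c h₃ => by simp [map_smul]; exact TensorProduct.map_smul_left _ _ _)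
    (fun c h h' => by simp [map_add]; exact TensorProduct.map_add_right _ _ _)
    (fun k c h => by simp [map_smul]; exact TensorProduct.map_smul_right _ _ _)

/-- `(id ⊗ Δ)`-form auxiliary map for `keyL`. -/
def QL (M : ModAlg K A H) (m : ℕ) (a : A) :
    H ⊗[K] (H ⊗[K] H) →ₗ[K] Tpow K A (m+1) →ₗ[K] Tpow K A (m+1) :=
  TensorProduct.lift <| LinearMap.mk₂ K
    (fun h₁ c => lmulL K A (m+1) (M.act h₁ a) ∘ₗ thetaC M m c)
    (fun h h' c => by simp [map_add, LinearMap.add_comp])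
    (fun k h c => by simp [map_smul, LinearMap.smul_comp])
    (fun h c c' => by simp [map_add, LinearMap.comp_add])
    (fun k h c => by simp [map_smul, LinearMap.comp_smul])

lemma map_rT (m : ℕ) (f f' : A →ₗ[K] A) (g : Tpow K A m →ₗ[K] Tpow K A m) :
    TensorProduct.map f g ∘ₗ LinearMap.rTensor (Tpow K A m) f'
      = TensorProduct.map (f ∘ₗ f') g := by
  apply TensorProduct.ext'
  intro x t
  rfl

lemma rT_map (m : ℕ) (f f' : A →ₗ[K] A) (g : Tpow K A m →ₗ[K] Tpow K A m) :
    LinearMap.rTensor (Tpow K A m) f' ∘ₗ TensorProduct.map f g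
      = TensorProduct.map (f' ∘ₗ f) g := by
  apply TensorProduct.ext'
  intro x t
  rfl

lemma map_lT (m : ℕ) (f : A →ₗ[K] A) (g g' : Tpow K A m →ₗ[K] Tpow K A m) :
    TensorProduct.map f g ∘ₗ LinearMap.lTensor A g'
      = TensorProduct.map f (g ∘ₗ g') := by
  apply TensorProduct.ext'
  intro x t
  rfl

lemma lT_map (m : ℕ) (f : A →ₗ[K] A) (g g' : Tpow K A m →ₗ[K] Tpow K A m) :
    LinearMap.lTensor A g' ∘ₗ TensorProduct.map f g
      = TensorProduct.map f (g' ∘ₗ g) := by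
  apply TensorProduct.ext'
  intro x t
  rfl

lemma keyL (M : ModAlg K A H) (m : ℕ) (a : A) (b : H) :
    theta M m b ∘ₗ lmulL K A m a
      = TensorProduct.lift (keyLbil M m a) (Coalgebra.comul (R := K) b) := by
  cases m with
  | zero => exact keyL_zero M a b
  | succ m =>
    have e1 : LinearMap.lcomp K (Tpow K A (m+1)) (lmulL K A (m+1) a) ∘ₗ thetaC M m
        = PL M m a ∘ₗ LinearMap.rTensor H (Coalgebra.comul (R := K)) := by
      apply TensorProduct.ext'
      intro h₁ h₂
      rw [LinearMap.comp_apply, LinearMap.comp_apply, LinearMap.lcomp_apply',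
        thetaC_tmul, LinearMap.rTensor_tmul]
      rw [show PL M m a (Coalgebra.comul (R := K) h₁ ⊗ₜ[K] h₂)
          = TensorProduct.map (TensorProduct.lift (keyLbil M 0 a)
              (Coalgebra.comul (R := K) h₁)) (theta M m h₂) from
        by rw [PL, TensorProduct.lift.tmul]; rfl]
      rw [← keyL_zero, lmulL_succ]
      exact map_rT m (M.act h₁) (lmulL K A 0 a) (theta M m h₂)
    have e2 : PL M m a ∘ₗ (TensorProduct.assoc K H H H).symm.toLinearMap = QL M m a := by
      apply TensorProduct.ext'
      intro h₁ c
      induction c using TensorProduct.induction_on with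
      | zero => simp only [TensorProduct.tmul_zero, map_zero]
      | add u v hu hv => simp only [TensorProduct.tmul_add, map_add, hu, hv]
      | tmul h₂ h₃ =>
        rw [LinearMap.comp_apply, LinearEquiv.coe_coe, TensorProduct.assoc_symm_tmul]
        rw [show PL M m a ((h₁ ⊗ₜ[K] h₂) ⊗ₜ[K] h₃)
            = TensorProduct.map (TensorProduct.lift (keyLbil M 0 a) (h₁ ⊗ₜ[K] h₂))
                (theta M m h₃) from
          by rw [PL, TensorProduct.lift.tmul]; rfl]
        rw [show QL M m a (h₁ ⊗ₜ[K] (h₂ ⊗ₜ[K] h₃))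
            = lmulL K A (m+1) (M.act h₁ a) ∘ₗ thetaC M m (h₂ ⊗ₜ[K] h₃) from
          by rw [QL, TensorProduct.lift.tmul, LinearMap.mk₂_apply]]
        rw [TensorProduct.lift.tmul, thetaC_tmul, lmulL_succ]
        exact (rT_map m (M.act h₂) (lmulL K A 0 (M.act h₁ a)) (theta M m h₃)).symm
    have e3 : QL M m a ∘ₗ LinearMap.lTensor H (Coalgebra.comul (R := K))
        = TensorProduct.lift (keyLbil M (m+1) a) := by
      apply TensorProduct.ext'
      intro h₁ h₂
      rw [LinearMap.comp_apply, LinearMap.lTensor_tmul]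
      rw [show QL M m a (h₁ ⊗ₜ[K] (Coalgebra.comul (R := K) h₂))
          = lmulL K A (m+1) (M.act h₁ a) ∘ₗ thetaC M m (Coalgebra.comul (R := K) h₂) from
        by rw [QL, TensorProduct.lift.tmul, LinearMap.mk₂_apply]]
      rw [TensorProduct.lift.tmul, ← theta_succ]
      rfl
    calc theta M (m+1) b ∘ₗ lmulL K A (m+1) a
        = (LinearMap.lcomp K (Tpow K A (m+1)) (lmulL K A (m+1) a) ∘ₗ thetaC M m)
            (Coalgebra.comul (R := K) b) := by
          rw [theta_succ]; rfl
      _ = PL M m a (LinearMap.rTensor H (Coalgebra.comul (R := K))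
            (Coalgebra.comul (R := K) b)) := by rw [e1]; rfl
      _ = PL M m a ((TensorProduct.assoc K H H H).symm
            (LinearMap.lTensor H (Coalgebra.comul (R := K))
              (Coalgebra.comul (R := K) b))) := by
          rw [Coalgebra.coassoc_symm_apply]
      _ = (PL M m a ∘ₗ (TensorProduct.assoc K H H H).symm.toLinearMap)
            (LinearMap.lTensor H (Coalgebra.comul (R := K))
              (Coalgebra.comul (R := K) b)) := rfl
      _ = TensorProduct.lift (keyLbil M (m+1) a) (Coalgebra.comul (R := K) b) := by
          rw [e2, ← e3]; rfl

/-- `(Δ ⊗ id)`-form auxiliary map for `keyR`. -/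
def PR (M : ModAlg K A H) (m : ℕ) (a' : A) :
    (H ⊗[K] H) ⊗[K] H →ₗ[K] Tpow K A (m+1) →ₗ[K] Tpow K A (m+1) :=
  TensorProduct.lift <| LinearMap.mk₂ K
    (fun c h₃ => rmulL K A (m+1) (M.act h₃ a') ∘ₗ thetaC M m c)
    (fun c c' h₃ => by simp [map_add, LinearMap.comp_add])
    (fun k c h₃ => by simp [map_smul, LinearMap.comp_smul])
    (fun c h h' => by simp [map_add, LinearMap.add_comp])
    (fun k c h => by simp [map_smul, LinearMap.smul_comp])

/-- `(id ⊗ Δ)`-form auxiliary map for `keyR`. -/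
def QR (M : ModAlg K A H) (m : ℕ) (a' : A) :
    H ⊗[K] (H ⊗[K] H) →ₗ[K] Tpow K A (m+1) →ₗ[K] Tpow K A (m+1) :=
  TensorProduct.lift <| LinearMap.mk₂ K
    (fun h₁ c => TensorProduct.map (M.act h₁) (TensorProduct.lift (keyRbil M m a') c))
    (fun h h' c => by simp [map_add]; exact TensorProduct.map_add_left _ _ _)
    (fun k h c => by simp [map_smul]; exact TensorProduct.map_smul_left _ _ _)
    (fun h c c' => by simp [map_add]; exact TensorProduct.map_add_right _ _ _)
    (fun k h c => by simp [map_smul]; exact TensorProduct.map_smul_right _ _ _)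

lemma keyR (M : ModAlg K A H) : ∀ (m : ℕ) (a' : A) (b : H),
    theta M m b ∘ₗ rmulL K A m a'
      = TensorProduct.lift (keyRbil M m a') (Coalgebra.comul (R := K) b) := by
  intro m
  induction m with
  | zero => exact keyR_zero M
  | succ m ih =>
    intro a' b
    have e1 : LinearMap.lcomp K (Tpow K A (m+1)) (rmulL K A (m+1) a') ∘ₗ thetaC M m
        = QR M m a' ∘ₗ LinearMap.lTensor H (Coalgebra.comul (R := K)) := by
      apply TensorProduct.ext'
      intro h₁ h₂
      rw [LinearMap.comp_apply, LinearMap.comp_apply, LinearMap.lcomp_apply',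
        thetaC_tmul, LinearMap.lTensor_tmul]
      rw [show QR M m a' (h₁ ⊗ₜ[K] (Coalgebra.comul (R := K) h₂))
          = TensorProduct.map (M.act h₁) (TensorProduct.lift (keyRbil M m a')
              (Coalgebra.comul (R := K) h₂)) from
        by rw [QR, TensorProduct.lift.tmul]; rfl]
      rw [← ih, rmulL_succ]
      exact map_lT m (M.act h₁) (theta M m h₂) (rmulL K A m a')
    have e2 : PR M m a' ∘ₗ (TensorProduct.assoc K H H H).symm.toLinearMap = QR M m a' := by
      apply TensorProduct.ext'
      intro h₁ c
      induction c using TensorProduct.induction_on with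
      | zero => simp only [TensorProduct.tmul_zero, map_zero]
      | add u v hu hv => simp only [TensorProduct.tmul_add, map_add, hu, hv]
      | tmul h₂ h₃ =>
        rw [LinearMap.comp_apply, LinearEquiv.coe_coe, TensorProduct.assoc_symm_tmul]
        rw [show PR M m a' ((h₁ ⊗ₜ[K] h₂) ⊗ₜ[K] h₃)
            = rmulL K A (m+1) (M.act h₃ a') ∘ₗ thetaC M m (h₁ ⊗ₜ[K] h₂) from
          by rw [PR, TensorProduct.lift.tmul, LinearMap.mk₂_apply]]
        rw [show QR M m a' (h₁ ⊗ₜ[K] (h₂ ⊗ₜ[K] h₃))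
            = TensorProduct.map (M.act h₁) (TensorProduct.lift (keyRbil M m a')
                (h₂ ⊗ₜ[K] h₃)) from
          by rw [QR, TensorProduct.lift.tmul]; rfl]
        rw [TensorProduct.lift.tmul, thetaC_tmul, rmulL_succ]
        exact lT_map m (M.act h₁) (theta M m h₂) (rmulL K A m (M.act h₃ a'))
    have e3 : PR M m a' ∘ₗ LinearMap.rTensor H (Coalgebra.comul (R := K))
        = TensorProduct.lift (keyRbil M (m+1) a') := by
      apply TensorProduct.ext'
      intro h₁ h₂
      rw [LinearMap.comp_apply, LinearMap.rTensor_tmul]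
      rw [show PR M m a' ((Coalgebra.comul (R := K) h₁) ⊗ₜ[K] h₂)
          = rmulL K A (m+1) (M.act h₂ a') ∘ₗ thetaC M m (Coalgebra.comul (R := K) h₁) from
        by rw [PR, TensorProduct.lift.tmul, LinearMap.mk₂_apply]]
      rw [TensorProduct.lift.tmul, ← theta_succ]
      rfl
    calc theta M (m+1) b ∘ₗ rmulL K A (m+1) a'
        = (LinearMap.lcomp K (Tpow K A (m+1)) (rmulL K A (m+1) a') ∘ₗ thetaC M m)
            (Coalgebra.comul (R := K) b) := by
          rw [theta_succ]; rfl
      _ = QR M m a' (LinearMap.lTensor H (Coalgebra.comul (R := K))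
            (Coalgebra.comul (R := K) b)) := by rw [e1]; rfl
      _ = (PR M m a' ∘ₗ (TensorProduct.assoc K H H H).symm.toLinearMap)
            (LinearMap.lTensor H (Coalgebra.comul (R := K))
              (Coalgebra.comul (R := K) b)) := by rw [e2]
      _ = PR M m a' ((TensorProduct.assoc K H H H).symm
            (LinearMap.lTensor H (Coalgebra.comul (R := K))
              (Coalgebra.comul (R := K) b))) := rfl
      _ = PR M m a' (LinearMap.rTensor H (Coalgebra.comul (R := K))
            (Coalgebra.comul (R := K) b)) := by rw [Coalgebra.coassoc_symm_apply]
      _ = TensorProduct.lift (keyRbil M (m+1) a') (Coalgebra.comul (R := K) b) := by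
          rw [← e3]; rfl

/-- The combined Sweedler map `h₁ ⊗ (h₂ ⊗ h₃) ↦ lmulL (h₁a) ∘ rmulL (h₃a') ∘ Θ h₂`. -/
def xiB (M : ModAlg K A H) (m : ℕ) (a a' : A) :
    H ⊗[K] (H ⊗[K] H) →ₗ[K] Tpow K A m →ₗ[K] Tpow K A m :=
  TensorProduct.lift <| LinearMap.mk₂ K
    (fun h₁ c => lmulL K A m (M.act h₁ a) ∘ₗ TensorProduct.lift (keyRbil M m a') c)
    (fun h h' c => by simp [map_add, LinearMap.add_comp])
    (fun k h c => by simp [map_smul, LinearMap.smul_comp])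
    (fun h c c' => by simp [map_add, LinearMap.comp_add])
    (fun k h c => by simp [map_smul, LinearMap.comp_smul])

lemma xiB_tmul (M : ModAlg K A H) (m : ℕ) (a a' : A) (h₁ : H) (c : H ⊗[K] H) :
    xiB M m a a' (h₁ ⊗ₜ[K] c)
      = lmulL K A m (M.act h₁ a) ∘ₗ TensorProduct.lift (keyRbil M m a') c := by
  rw [xiB, TensorProduct.lift.tmul, LinearMap.mk₂_apply]

lemma key (M : ModAlg K A H) (m : ℕ) (a a' : A) (b : H) :
    theta M m b ∘ₗ (lmulL K A m a ∘ₗ rmulL K A m a')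
      = xiB M m a a' ((LinearMap.lTensor H (Coalgebra.comul (R := K)) ∘ₗ
          Coalgebra.comul (R := K)) b) := by
  have e : LinearMap.lcomp K (Tpow K A m) (rmulL K A m a') ∘ₗ
      TensorProduct.lift (keyLbil M m a)
      = xiB M m a a' ∘ₗ LinearMap.lTensor H (Coalgebra.comul (R := K)) := by
    apply TensorProduct.ext'
    intro h₁ h₂
    rw [LinearMap.comp_apply, LinearMap.comp_apply, LinearMap.lcomp_apply',
      TensorProduct.lift.tmul, LinearMap.lTensor_tmul, xiB_tmul]
    rw [show (keyLbil M m a) h₁ h₂ = lmulL K A m (M.act h₁ a) ∘ₗ theta M m h₂ from rfl]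
    rw [LinearMap.comp_assoc, keyR]
  calc theta M m b ∘ₗ (lmulL K A m a ∘ₗ rmulL K A m a')
      = (theta M m b ∘ₗ lmulL K A m a) ∘ₗ rmulL K A m a' := by
        rw [LinearMap.comp_assoc]
    _ = (LinearMap.lcomp K (Tpow K A m) (rmulL K A m a') ∘ₗ
          TensorProduct.lift (keyLbil M m a)) (Coalgebra.comul (R := K) b) := by
        rw [keyL]; rfl
    _ = xiB M m a a' (LinearMap.lTensor H (Coalgebra.comul (R := K))
          (Coalgebra.comul (R := K) b)) := by rw [e]; rfl
    _ = _ := rfl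

end DeligneAux

/-- For each `n ≥ 0`, the action
`(a ⊗ a′ ⊗ b)(a₀ ⊗ ⋯ ⊗ a_{n+1}) = Σ a b₍₁₎a₀ ⊗ b₍₂₎a₁ ⊗ ⋯ ⊗ b₍ₙ₊₂₎a_{n+1}a′`
makes `A^{⊗(n+2)}` into a left module over the crossed product algebra `X = A ⊗ A ⊗ H`. -/
theorem crossed_product_module_on_tensor_power
    {K A H : Type u} [Field K] [Ring A] [Algebra K A] [Ring H] [Bialgebra K H]
    (M : ModAlg K A H) (n : ℕ)
    (mul : (A ⊗[K] (A ⊗[K] H)) →ₗ[K] (A ⊗[K] (A ⊗[K] H)) →ₗ[K] (A ⊗[K] (A ⊗[K] H)))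
    (hmul : XMulFormula K A H M.act mul)
    (ρ : (A ⊗[K] (A ⊗[K] H)) →ₗ[K] Tpow K A (n + 1) →ₗ[K] Tpow K A (n + 1))
    (hρ : ∀ (a a' : A) (b : H),
      ρ (a ⊗ₜ[K] (a' ⊗ₜ[K] b)) = xActP K A H M.act (n + 1) a a' b) :
    ρ ((1 : A) ⊗ₜ[K] ((1 : A) ⊗ₜ[K] (1 : H))) = LinearMap.id ∧
    ∀ x y : A ⊗[K] (A ⊗[K] H), ρ (mul x y) = ρ x ∘ₗ ρ y := by
  constructor
  · rw [hρ]
    rw [show xActP K A H M.act (n+1) 1 1 1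
        = lmulL K A (n+1) 1 ∘ₗ (rmulL K A (n+1) 1 ∘ₗ theta M (n+1) 1) from rfl]
    rw [lmulL_one, rmulL_one, theta_one, LinearMap.id_comp, LinearMap.id_comp]
  · have core : ∀ (a₁ a₁' : A) (b₁ : H) (a₂ a₂' : A) (b₂ : H),
        ρ (mul (a₁ ⊗ₜ[K] (a₁' ⊗ₜ[K] b₁)) (a₂ ⊗ₜ[K] (a₂' ⊗ₜ[K] b₂)))
          = ρ (a₁ ⊗ₜ[K] (a₁' ⊗ₜ[K] b₁)) ∘ₗ ρ (a₂ ⊗ₜ[K] (a₂' ⊗ₜ[K] b₂)) := by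
      intro a₁ a₁' b₁ a₂ a₂' b₂
      have sw : ∀ (c : A) (Z : Tpow K A (n+1) →ₗ[K] Tpow K A (n+1)),
          lmulL K A (n+1) c ∘ₗ (rmulL K A (n+1) a₁' ∘ₗ Z)
            = rmulL K A (n+1) a₁' ∘ₗ (lmulL K A (n+1) c ∘ₗ Z) := by
        intro c Z
        rw [← LinearMap.comp_assoc, ← LinearMap.comp_assoc, lr_comm]
      have E : ρ ∘ₗ TensorProduct.map
            (LinearMap.mulLeft K a₁ ∘ₗ M.act.flip a₂)
            ((TensorProduct.map (LinearMap.mulRight K a₁' ∘ₗ M.act.flip a₂')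
                (LinearMap.mulRight K b₂)) ∘ₗ (TensorProduct.comm K H H).toLinearMap)
          = (LinearMap.llcomp K (Tpow K A (n+1)) (Tpow K A (n+1)) (Tpow K A (n+1))
                (lmulL K A (n+1) a₁) ∘ₗ
             LinearMap.llcomp K (Tpow K A (n+1)) (Tpow K A (n+1)) (Tpow K A (n+1))
                (rmulL K A (n+1) a₁') ∘ₗ
             LinearMap.lcomp K (Tpow K A (n+1)) (theta M (n+1) b₂)) ∘ₗ
            xiB M (n+1) a₂ a₂' := by
        apply TensorProduct.ext'
        intro h₁ c
        induction c using TensorProduct.induction_on with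
        | zero => simp only [TensorProduct.tmul_zero, map_zero]
        | add u v hu hv => simp only [TensorProduct.tmul_add, map_add, hu, hv]
        | tmul h₂ h₃ =>
          simp only [LinearMap.comp_apply, TensorProduct.map_tmul, LinearEquiv.coe_coe,
            TensorProduct.comm_tmul, LinearMap.flip_apply, LinearMap.mulLeft_apply,
            LinearMap.mulRight_apply, xiB_tmul, LinearMap.llcomp_apply',
            LinearMap.lcomp_apply']
          rw [hρ]
          rw [show xActP K A H M.act (n+1) (a₁ * M.act h₁ a₂) (M.act h₃ a₂' * a₁') (h₂ * b₂)
              = lmulL K A (n+1) (a₁ * M.act h₁ a₂) ∘ₗ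
                  (rmulL K A (n+1) (M.act h₃ a₂' * a₁') ∘ₗ theta M (n+1) (h₂ * b₂)) from rfl]
          rw [show TensorProduct.lift (keyRbil M (n+1) a₂') (h₂ ⊗ₜ[K] h₃)
              = rmulL K A (n+1) (M.act h₃ a₂') ∘ₗ theta M (n+1) h₂ from
            by rw [TensorProduct.lift.tmul]; rfl]
          rw [lmulL_mul, rmulL_mul, theta_mul]
          simp only [LinearMap.comp_assoc]
          rw [sw]
      calc ρ (mul (a₁ ⊗ₜ[K] (a₁' ⊗ₜ[K] b₁)) (a₂ ⊗ₜ[K] (a₂' ⊗ₜ[K] b₂)))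
          = (ρ ∘ₗ TensorProduct.map
              (LinearMap.mulLeft K a₁ ∘ₗ M.act.flip a₂)
              ((TensorProduct.map (LinearMap.mulRight K a₁' ∘ₗ M.act.flip a₂')
                  (LinearMap.mulRight K b₂)) ∘ₗ (TensorProduct.comm K H H).toLinearMap))
              ((LinearMap.lTensor H (Coalgebra.comul (R := K)) ∘ₗ
                Coalgebra.comul (R := K)) b₁) := by
            rw [hmul a₁ a₁' b₁ a₂ a₂' b₂]; rfl
        _ = (LinearMap.llcomp K (Tpow K A (n+1)) (Tpow K A (n+1)) (Tpow K A (n+1))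
                (lmulL K A (n+1) a₁) ∘ₗ
             LinearMap.llcomp K (Tpow K A (n+1)) (Tpow K A (n+1)) (Tpow K A (n+1))
                (rmulL K A (n+1) a₁') ∘ₗ
             LinearMap.lcomp K (Tpow K A (n+1)) (theta M (n+1) b₂))
              (xiB M (n+1) a₂ a₂' ((LinearMap.lTensor H (Coalgebra.comul (R := K)) ∘ₗ
                Coalgebra.comul (R := K)) b₁)) := by rw [E]; rfl
        _ = (LinearMap.llcomp K (Tpow K A (n+1)) (Tpow K A (n+1)) (Tpow K A (n+1))
                (lmulL K A (n+1) a₁) ∘ₗ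
             LinearMap.llcomp K (Tpow K A (n+1)) (Tpow K A (n+1)) (Tpow K A (n+1))
                (rmulL K A (n+1) a₁') ∘ₗ
             LinearMap.lcomp K (Tpow K A (n+1)) (theta M (n+1) b₂))
              (theta M (n+1) b₁ ∘ₗ (lmulL K A (n+1) a₂ ∘ₗ rmulL K A (n+1) a₂')) := by
            rw [← key]
        _ = ρ (a₁ ⊗ₜ[K] (a₁' ⊗ₜ[K] b₁)) ∘ₗ ρ (a₂ ⊗ₜ[K] (a₂' ⊗ₜ[K] b₂)) := by
            rw [hρ, hρ]
            rw [show xActP K A H M.act (n+1) a₁ a₁' b₁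
                = lmulL K A (n+1) a₁ ∘ₗ (rmulL K A (n+1) a₁' ∘ₗ theta M (n+1) b₁) from rfl]
            rw [show xActP K A H M.act (n+1) a₂ a₂' b₂
                = lmulL K A (n+1) a₂ ∘ₗ (rmulL K A (n+1) a₂' ∘ₗ theta M (n+1) b₂) from rfl]
            rw [LinearMap.comp_apply, LinearMap.comp_apply, LinearMap.llcomp_apply',
              LinearMap.llcomp_apply', LinearMap.lcomp_apply']
            simp only [LinearMap.comp_assoc]
    intro x y
    induction x using TensorProduct.induction_on with
    | zero => simp only [map_zero, LinearMap.zero_apply, LinearMap.zero_comp]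
    | add u v hu hv =>
      simp only [map_add, LinearMap.add_apply, LinearMap.add_comp, hu, hv]
    | tmul a₁ w =>
      induction w using TensorProduct.induction_on with
      | zero => simp only [TensorProduct.tmul_zero, map_zero, LinearMap.zero_apply,
          LinearMap.zero_comp]
      | add u v hu hv =>
        simp only [TensorProduct.tmul_add, map_add, LinearMap.add_apply,
          LinearMap.add_comp, hu, hv]
      | tmul a₁' b₁ =>
        induction y using TensorProduct.induction_on with
        | zero => simp only [map_zero, LinearMap.comp_zero]
        | add u v hu hv =>
          simp only [map_add, LinearMap.comp_add, hu, hv]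
        | tmul a₂ w₂ =>
          induction w₂ using TensorProduct.induction_on with
          | zero => simp only [TensorProduct.tmul_zero, map_zero, LinearMap.comp_zero]
          | add u v hu hv =>
            simp only [TensorProduct.tmul_add, map_add, LinearMap.comp_add, hu, hv]
          | tmul a₂' b₂ => exact core a₁ a₁' b₁ a₂ a₂' b₂
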